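/- For any n×n real matrix A and any integer m with 1 ≤ m ≤ n−1, the m-th Newton inequality c_m(A)² ≥ c_{m−1}(A)·c_{m+1}(A) holds if and only if m(n−m) · Σ_{j=0}^{m} S_{m,m,j}(A) ≥ (m+1)(n−m+1) · Σ_{j=0}^{m−1} S_{m+1,m−1,j}(A). -/

import Mathlib

noncomputable def pminor {ι : Type*} [Fintype ι] [DecidableEq ι]
    (A : Matrix ι ι ℝ) (α : Finset ι) : ℝ :=
  (A.submatrix ((↑) : α → ι) ((↑) : α → ι)).det

noncomputable def Sfun {ι : Type*} [Fintype ι] [DecidableEq ι]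
    (A : Matrix ι ι ℝ) (m₁ m₂ k : ℕ) : ℝ :=
  ∑ α ∈ Finset.univ.powersetCard m₁, ∑ β ∈ Finset.univ.powersetCard m₂,
    if (α ∩ β).card = k then pminor A α * pminor A β else 0

noncomputable def cfun {n : ℕ} (A : Matrix (Fin n) (Fin n) ℝ) (j : ℕ) : ℝ :=
  (∑ α ∈ Finset.univ.powersetCard j, pminor A α) / (n.choose j)

lemma sum_Sfun {ι : Type*} [Fintype ι] [DecidableEq ι]
    (A : Matrix ι ι ℝ) (m₁ m₂ N : ℕ) (h : m₁ < N ∨ m₂ < N) :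
    ∑ j ∈ Finset.range N, Sfun A m₁ m₂ j =
      (∑ α ∈ Finset.univ.powersetCard m₁, pminor A α) *
        (∑ β ∈ Finset.univ.powersetCard m₂, pminor A β) := by
  unfold Sfun
  rw [Finset.sum_mul_sum]
  rw [Finset.sum_comm]
  refine Finset.sum_congr rfl fun α hα => ?_
  rw [Finset.sum_comm]
  refine Finset.sum_congr rfl fun β hβ => ?_
  rw [Finset.sum_ite_eq]
  have hcard : (α ∩ β).card < N := by
    rcases h with h | h
    · exact lt_of_le_of_lt (le_trans (Finset.card_le_card Finset.inter_subset_left)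
        (le_of_eq (Finset.mem_powersetCard_univ.mp hα))) h
    · exact lt_of_le_of_lt (le_trans (Finset.card_le_card Finset.inter_subset_right)
        (le_of_eq (Finset.mem_powersetCard_univ.mp hβ))) h
  simp [Finset.mem_range.mpr hcard]

theorem stmt_8 {n : ℕ} (A : Matrix (Fin n) (Fin n) ℝ)
    (m : ℕ) (hm1 : 1 ≤ m) (hmn : m ≤ n - 1) :
    cfun A m ^ 2 ≥ cfun A (m - 1) * cfun A (m + 1) ↔
      (m : ℝ) * ((n : ℝ) - m) * ∑ j ∈ Finset.range (m + 1), Sfun A m m j ≥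
        ((m : ℝ) + 1) * ((n : ℝ) - m + 1) *
          ∑ j ∈ Finset.range m, Sfun A (m + 1) (m - 1) j := by
  have hn : m + 1 ≤ n := by omega
  rw [sum_Sfun A m m (m + 1) (Or.inl (Nat.lt_succ_self m)),
    sum_Sfun A (m + 1) (m - 1) m (Or.inr (by omega))]
  set a : ℝ := ∑ α ∈ Finset.univ.powersetCard (m - 1), pminor A α with ha
  set b : ℝ := ∑ α ∈ Finset.univ.powersetCard m, pminor A α with hb
  set c : ℝ := ∑ α ∈ Finset.univ.powersetCard (m + 1), pminor A α with hc
  have hC : (0 : ℝ) < (n.choose m : ℝ) := by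
    exact_mod_cast Nat.choose_pos (by omega)
  have hC1 : (0 : ℝ) < (n.choose (m - 1) : ℝ) := by
    exact_mod_cast Nat.choose_pos (by omega)
  have hC2 : (0 : ℝ) < (n.choose (m + 1) : ℝ) := by
    exact_mod_cast Nat.choose_pos hn
  -- nat identities
  have h1 : n.choose m * m = n.choose (m - 1) * (n - m + 1) := by
    have := Nat.choose_succ_right_eq n (m - 1)
    have hm : m - 1 + 1 = m := by omega
    rw [hm] at this
    rw [this]
    congr 1
    omega
  have h2 : n.choose (m + 1) * (m + 1) = n.choose m * (n - m) :=
    Nat.choose_succ_right_eq n m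
  have key : (m : ℝ) * ((n : ℝ) - m) * ((n.choose m : ℝ) * (n.choose m : ℝ)) =
      ((m : ℝ) + 1) * ((n : ℝ) - m + 1) * ((n.choose (m - 1) : ℝ) * (n.choose (m + 1) : ℝ)) := by
    have hcast : ((n - m : ℕ) : ℝ) = (n : ℝ) - m := Nat.cast_sub (by omega)
    have e1 : (n.choose m : ℝ) * m = (n.choose (m - 1) : ℝ) * ((n : ℝ) - m + 1) := by
      have := congrArg (fun x : ℕ => (x : ℝ)) h1
      push_cast at this
      rw [this, hcast]
    have e2 : (n.choose (m + 1) : ℝ) * ((m : ℝ) + 1) = (n.choose m : ℝ) * ((n : ℝ) - m) := by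
      have := congrArg (fun x : ℕ => (x : ℝ)) h2
      push_cast at this
      rw [this, hcast]
    linear_combination ((n.choose m : ℝ) * ((n : ℝ) - m)) * e1 -
      ((n.choose (m - 1) : ℝ) * ((n : ℝ) - m + 1)) * e2
  have hp : (0 : ℝ) < ((m : ℝ) + 1) * ((n : ℝ) - m + 1) := by
    have : (m : ℝ) + 1 ≤ n := by exact_mod_cast hn
    nlinarith
  have k2 : (m : ℝ) * ((n : ℝ) - m) * ((n.choose m : ℝ) * (n.choose m : ℝ)) * (b * b) =
      ((m : ℝ) + 1) * ((n : ℝ) - m + 1) *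
        ((n.choose (m - 1) : ℝ) * (n.choose (m + 1) : ℝ)) * (b * b) := by
    linear_combination (b * b) * key
  unfold cfun
  rw [ge_iff_le, ge_iff_le, div_mul_div_comm, div_pow, ← ha, ← hb, ← hc,
    div_le_div_iff₀ (by positivity) (by positivity)]
  constructor
  · intro h
    rw [← mul_le_mul_iff_of_pos_right (show (0:ℝ) < (n.choose m : ℝ) * (n.choose m : ℝ) from by positivity)]
    have h' := mul_le_mul_of_nonneg_left h hp.le
    nlinarith [h', k2]
  · intro h
    rw [← mul_le_mul_iff_of_pos_left hp]
    have h' := mul_le_mul_of_nonneg_right h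
      (show (0:ℝ) ≤ (n.choose m : ℝ) * (n.choose m : ℝ) from by positivity)
    nlinarith [h', k2]
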